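/- Let Φ : I → ℝ be a convex function on an interval I of positive real numbers, let T, V be bounded linear invertible operators on a complex Hilbert space H, and let 0 < m < M with [m², M²] contained in the interior of I and m‖Tx‖ ≤ ‖Vx‖ ≤ M‖Tx‖ for all x ∈ H. Then for every subgradient selection φ of Φ and every x ∈ H with x ≠ 0, writing r := ‖Vx‖²/‖Tx‖², one has ⊙_Φ(V,T) ≥ Φ(r)|T|² + φ(r)(|V|² − r|T|²) in the operator order. -/

import Mathlib

variable {H : Type*} [NormedAddCommGroup H] [InnerProductSpace ℂ H] [CompleteSpace H]

/-- `X = |VT⁻¹|² = (T*)⁻¹ V* V T⁻¹`. -/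
noncomputable def qX (V T : (H →L[ℂ] H)ˣ) : H →L[ℂ] H :=
  star (↑(T⁻¹) : H →L[ℂ] H) * (star (V : H →L[ℂ] H) * (V : H →L[ℂ] H)) * (↑(T⁻¹) : H →L[ℂ] H)

/-- The quadratic operator perspective `⊙_Φ(V,T) = T* Φ(X) T`. -/
noncomputable def qPersp (Φ : ℝ → ℝ) (V T : (H →L[ℂ] H)ˣ) : H →L[ℂ] H :=
  star (T : H →L[ℂ] H) * cfc Φ (qX V T) * (T : H →L[ℂ] H)

/-- `|T|² = T*T`. -/
noncomputable def modSq (T : (H →L[ℂ] H)ˣ) : H →L[ℂ] H :=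
  star (T : H →L[ℂ] H) * (T : H →L[ℂ] H)

set_option synthInstance.maxHeartbeats 800000 in
set_option maxHeartbeats 1600000 in
open ContinuousLinearMap in
theorem stmt3 (I : Set ℝ) (hIpos : I ⊆ Set.Ioi 0)
    (Φ : ℝ → ℝ) (hΦ : ConvexOn ℝ I Φ)
    (T V : (H →L[ℂ] H)ˣ) (m M : ℝ) (hm : 0 < m) (hmM : m < M)
    (hsub : Set.Icc (m ^ 2) (M ^ 2) ⊆ interior I)
    (hTV : ∀ x : H, m * ‖(T : H →L[ℂ] H) x‖ ≤ ‖(V : H →L[ℂ] H) x‖ ∧ ‖(V : H →L[ℂ] H) x‖ ≤ M * ‖(T : H →L[ℂ] H) x‖)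
    (φ : ℝ → ℝ) (hφ : ∀ a ∈ interior I, ∀ t ∈ I, Φ a + (t - a) * φ a ≤ Φ t)
    (x : H) (hx : x ≠ 0) (r : ℝ) (hr : r = ‖(V : H →L[ℂ] H) x‖ ^ 2 / ‖(T : H →L[ℂ] H) x‖ ^ 2) :
    Φ r • modSq T + φ r • (modSq V - r • modSq T) ≤ qPersp Φ V T := by
  set Tc : H →L[ℂ] H := (T : H →L[ℂ] H) with hTcdef
  set Vc : H →L[ℂ] H := (V : H →L[ℂ] H) with hVcdef
  set Ti : H →L[ℂ] H := (↑(T⁻¹) : H →L[ℂ] H) with hTidef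
  have hTiT : Ti * Tc = 1 := by
    rw [hTidef, hTcdef, ← Units.val_mul, inv_mul_cancel, Units.val_one]
  have hTTi : Tc * Ti = 1 := by
    rw [hTidef, hTcdef, ← Units.val_mul, mul_inv_cancel, Units.val_one]
  set B : H →L[ℂ] H := Vc * Ti with hBdef
  set X : H →L[ℂ] H := qX V T with hXdef
  have hXB : X = star B * B := by
    simp only [hXdef, qX, hBdef, star_mul, mul_assoc]
    rfl
  have hXsa : IsSelfAdjoint X := hXB ▸ IsSelfAdjoint.star_mul_self B
  -- pointwise norm bounds for B
  have hTpt : ∀ y : H, Tc (Ti y) = y := fun y => by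
    have := congrArg (fun f : H →L[ℂ] H => f y) hTTi
    simpa using this
  have hBlow : ∀ y : H, m * ‖y‖ ≤ ‖B y‖ := fun y => by
    have h := (hTV (Ti y)).1
    rwa [hTpt y] at h
  have hBhigh : ∀ y : H, ‖B y‖ ≤ M * ‖y‖ := fun y => by
    have h := (hTV (Ti y)).2
    rwa [hTpt y] at h
  -- inner product identity
  have hinner : ∀ y : H, RCLike.re (inner ℂ (X y) y : ℂ) = ‖B y‖ ^ 2 := fun y => by
    rw [hXB]
    calc RCLike.re (inner ℂ ((star B * B) y) y : ℂ)
        = RCLike.re (inner ℂ (B y) (B y) : ℂ) := by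
          rw [mul_apply_eq_comp, star_eq_adjoint, adjoint_inner_left]
      _ = ‖B y‖ ^ 2 := by rw [inner_self_eq_norm_sq]
  -- operator bounds
  have hXub : X ≤ algebraMap ℝ (H →L[ℂ] H) (M ^ 2) := by
    rw [le_def]
    constructor
    · exact (((IsSelfAdjoint.all (M ^ 2)).algebraMap _).sub hXsa).isSymmetric
    · intro y
      have h1 : ‖B y‖ ^ 2 ≤ M ^ 2 * ‖y‖ ^ 2 := by
        have := hBhigh y
        calc ‖B y‖ ^ 2 ≤ (M * ‖y‖) ^ 2 := by
              exact pow_le_pow_left₀ (norm_nonneg _) this 2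
          _ = M ^ 2 * ‖y‖ ^ 2 := by ring
      have : RCLike.re (inner ℂ ((algebraMap ℝ (H →L[ℂ] H) (M ^ 2) - X) y) y : ℂ)
          = M ^ 2 * ‖y‖ ^ 2 - ‖B y‖ ^ 2 := by
        rw [sub_apply, inner_sub_left, map_sub, hinner y, Algebra.algebraMap_eq_smul_one]
        simp only [smul_apply, one_apply]
        rw [RCLike.real_smul_eq_coe_smul (K := ℂ), inner_smul_left]
        simp [inner_self_eq_norm_sq, ← Complex.ofReal_pow]
      rw [reApplyInnerSelf, this]
      linarith
  have hXlb : algebraMap ℝ (H →L[ℂ] H) (m ^ 2) ≤ X := by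
    rw [le_def]
    constructor
    · exact (hXsa.sub ((IsSelfAdjoint.all (m ^ 2)).algebraMap _)).isSymmetric
    · intro y
      have h1 : m ^ 2 * ‖y‖ ^ 2 ≤ ‖B y‖ ^ 2 := by
        have := hBlow y
        calc m ^ 2 * ‖y‖ ^ 2 = (m * ‖y‖) ^ 2 := by ring
          _ ≤ ‖B y‖ ^ 2 := by
              exact pow_le_pow_left₀ (by positivity) this 2
      have : RCLike.re (inner ℂ ((X - algebraMap ℝ (H →L[ℂ] H) (m ^ 2)) y) y : ℂ)
          = ‖B y‖ ^ 2 - m ^ 2 * ‖y‖ ^ 2 := by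
        rw [sub_apply, inner_sub_left, map_sub, hinner y, Algebra.algebraMap_eq_smul_one]
        simp only [smul_apply, one_apply]
        rw [RCLike.real_smul_eq_coe_smul (K := ℂ), inner_smul_left]
        simp [inner_self_eq_norm_sq, ← Complex.ofReal_pow]
      rw [reApplyInnerSelf, this]
      linarith
  have hspec : spectrum ℝ X ⊆ Set.Icc (m ^ 2) (M ^ 2) := fun t ht =>
    ⟨(algebraMap_le_iff_le_spectrum hXsa).mp hXlb t ht,
     (le_algebraMap_iff_spectrum_le hXsa).mp hXub t ht⟩
  -- r bounds
  have hTx : Tc x ≠ 0 := by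
    intro h
    apply hx
    have := congrArg (fun f : H →L[ℂ] H => f x) hTiT
    simp only [mul_apply_eq_comp, one_apply_eq_self] at this
    rw [h, map_zero] at this
    exact this.symm
  have hTxpos : (0 : ℝ) < ‖Tc x‖ ^ 2 := pow_pos (norm_pos_iff.mpr hTx) 2
  have hrm : m ^ 2 ≤ r := by
    rw [hr, le_div_iff₀ hTxpos]
    have := (hTV x).1
    calc m ^ 2 * ‖Tc x‖ ^ 2 = (m * ‖Tc x‖) ^ 2 := by ring
      _ ≤ ‖Vc x‖ ^ 2 := pow_le_pow_left₀ (by positivity) this 2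
  have hrM : r ≤ M ^ 2 := by
    rw [hr, div_le_iff₀ hTxpos]
    have := (hTV x).2
    calc ‖Vc x‖ ^ 2 ≤ (M * ‖Tc x‖) ^ 2 := pow_le_pow_left₀ (norm_nonneg _) this 2
      _ = M ^ 2 * ‖Tc x‖ ^ 2 := by ring
  have hrI : r ∈ interior I := hsub ⟨hrm, hrM⟩
  -- continuity of Φ on the spectrum
  have hΦc : ContinuousOn Φ (spectrum ℝ X) :=
    (hΦ.continuousOn_interior).mono (hspec.trans hsub)
  -- the affine minorant
  set g : ℝ → ℝ := fun t => (Φ r - r * φ r) + φ r * t with hgdef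
  have hkey : cfc g X ≤ cfc Φ X := by
    refine cfc_mono (fun t ht => ?_) (by fun_prop) hΦc
    have htI : t ∈ I := interior_subset (hsub (hspec ht))
    have := hφ r hrI t htI
    simp only [hgdef]
    linarith [this]
  have hcfcg : cfc g X = (Φ r - r * φ r) • (1 : H →L[ℂ] H) + φ r • X := by
    rw [hgdef]
    rw [cfc_const_add _ _ _ (by fun_prop) hXsa]
    rw [cfc_const_mul _ _ _ (by fun_prop)]
    rw [cfc_id' ℝ X hXsa, Algebra.algebraMap_eq_smul_one]
  have hconj := star_left_conjugate_le_conjugate hkey Tc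
  -- compute conjugation of X
  have hTXT : star Tc * X * Tc = star Vc * Vc := by
    rw [hXdef, qX]
    calc star Tc * (star Ti * (star Vc * Vc) * Ti) * Tc
        = (star Tc * star Ti) * (star Vc * Vc) * (Ti * Tc) := by
          simp only [mul_assoc]
      _ = star Vc * Vc := by
          rw [← star_mul, hTiT, star_one, one_mul, mul_one]
  have hconjg : star Tc * cfc g X * Tc
      = (Φ r - r * φ r) • (star Tc * Tc) + φ r • (star Vc * Vc) := by
    rw [hcfcg]
    rw [mul_add, add_mul, mul_smul_comm, mul_smul_comm, smul_mul_assoc, smul_mul_assoc,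
      mul_one, hTXT]
  have hLHS : Φ r • modSq T + φ r • (modSq V - r • modSq T)
      = star Tc * cfc g X * Tc := by
    rw [hconjg]
    simp only [modSq, ← hTcdef, ← hVcdef]
    rw [smul_sub, smul_smul, sub_smul, mul_comm (φ r) r]
    abel
  rw [hLHS]
  calc star Tc * cfc g X * Tc ≤ star Tc * cfc Φ X * Tc := hconj
    _ = qPersp Φ V T := rfl
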